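/- arXiv:1909.03168 — 3 statements merged into one kernel-verified Lean document; each statement's English description precedes it below -/
import Mathlib

section
/- Let H ∈ (1/2, 1) and t > 0. Then the function r ↦ (r^{1/2−H} − t^{1/2−H}) / (t−r)^{1/2+H} is Lebesgue integrable on the interval (0, t). (Near r = 0 the integrand behaves like r^{1/2−H} with 1/2−H > −1, and near r = t the numerator vanishes to first order so the integrand behaves like (t−r)^{1/2−H}.) -/
open MeasureTheory intervalIntegral

/-- Integrability of `r ↦ (r^{1/2−H} − t^{1/2−H})/(t−r)^{1/2+H}` on `(0,t)` for `H ∈ (1/2,1)`. -/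
theorem stmt1 (H : ℝ) (hH : H ∈ Set.Ioo (1/2 : ℝ) 1) (t : ℝ) (ht : 0 < t) :
    IntervalIntegrable
      (fun r : ℝ => (r ^ (1/2 - H) - t ^ (1/2 - H)) / (t - r) ^ (1/2 + H))
      MeasureTheory.volume 0 t := by
  obtain ⟨hH1, hH2⟩ := hH
  set a : ℝ := 1/2 - H with ha_def
  set b : ℝ := 1/2 + H with hb_def
  have ha_neg : a < 0 := by rw [ha_def]; linarith
  have ha_gt : (-1 : ℝ) < a := by rw [ha_def]; linarith
  have hb_pos : (0 : ℝ) < b := by rw [hb_def]; linarith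
  have hab : (1 : ℝ) - b = a := by rw [ha_def, hb_def]; ring
  have key1 : IntervalIntegrable (fun r : ℝ => (r ^ a - t ^ a) / (t - r) ^ b)
      volume 0 (t/2) := by
    have hcont : ContinuousOn (fun r : ℝ => ((t - r) ^ b)⁻¹) (Set.uIcc 0 (t/2)) := by
      apply ContinuousOn.inv₀
      · exact ((continuous_const.sub continuous_id).continuousOn).rpow_const
          (fun x _ => Or.inr hb_pos.le)
      · intro x hx
        rw [Set.uIcc_of_le (by linarith)] at hx
        have h2 : 0 < t - x := by have := hx.2; linarith
        positivity
    have h1 : IntervalIntegrable (fun r : ℝ => r ^ a * ((t - r) ^ b)⁻¹) volume 0 (t/2) :=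
      (intervalIntegral.intervalIntegrable_rpow' ha_gt).mul_continuousOn hcont
    have h2 : IntervalIntegrable (fun r : ℝ => t ^ a * ((t - r) ^ b)⁻¹) volume 0 (t/2) :=
      (continuousOn_const.mul hcont).intervalIntegrable
    have heq : (fun r : ℝ => (r ^ a - t ^ a) / (t - r) ^ b)
        = fun r : ℝ => r ^ a * ((t - r) ^ b)⁻¹ - t ^ a * ((t - r) ^ b)⁻¹ := by
      funext r; rw [sub_div, div_eq_mul_inv, div_eq_mul_inv]
    rw [heq]; exact h1.sub h2
  have hC : 0 ≤ |a| * (t/2) ^ (a-1) := by positivity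
  have hmaj : IntervalIntegrable (fun r : ℝ => |a| * (t/2)^(a-1) * (t - r) ^ a)
      volume (t/2) t := by
    apply IntervalIntegrable.const_mul
    have h0 : IntervalIntegrable (fun x : ℝ => x ^ a) volume (t - t/2) (t - t) :=
      intervalIntegral.intervalIntegrable_rpow' ha_gt
    simpa using h0.comp_sub_left t
  have hineq : ∀ r ∈ Set.Icc (t/2) t, |r ^ a - t ^ a| ≤ |a| * (t/2)^(a-1) * (t - r) := by
    intro r hr
    have hderiv : ∀ x ∈ Set.Icc (t/2) t,
        HasDerivWithinAt (fun y : ℝ => y ^ a) (a * x ^ (a-1)) (Set.Icc (t/2) t) x := by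
      intro x hx
      exact (Real.hasDerivAt_rpow_const (p := a)
        (Or.inl (ne_of_gt (lt_of_lt_of_le (by linarith) hx.1)))).hasDerivWithinAt
    have hbound : ∀ x ∈ Set.Icc (t/2) t, ‖a * x ^ (a-1)‖ ≤ |a| * (t/2)^(a-1) := by
      intro x hx
      rw [norm_mul, Real.norm_eq_abs, Real.norm_eq_abs]
      have hx0 : (0:ℝ) < x := by have := hx.1; linarith
      rw [abs_of_pos (Real.rpow_pos_of_pos hx0 _)]
      have : x ^ (a-1) ≤ (t/2) ^ (a-1) :=
        Real.rpow_le_rpow_of_nonpos (by positivity) hx.1 (by linarith)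
      exact mul_le_mul_of_nonneg_left this (abs_nonneg a)
    have := (convex_Icc (t/2) t).norm_image_sub_le_of_norm_hasDerivWithin_le hderiv hbound
      (Set.right_mem_Icc.mpr (by linarith)) hr
    simpa [abs_of_nonpos (by linarith [hr.2] : r - t ≤ 0)] using this
  have key2 : IntervalIntegrable (fun r : ℝ => (r ^ a - t ^ a) / (t - r) ^ b)
      volume (t/2) t := by
    apply hmaj.mono_fun'
    · apply Measurable.aestronglyMeasurable
      fun_prop
    · rw [Set.uIoc_of_le (by linarith)]
      filter_upwards [ae_restrict_mem measurableSet_Ioc] with r hr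
      have hr' : r ∈ Set.Icc (t/2) t := ⟨hr.1.le, hr.2⟩
      rcases eq_or_lt_of_le hr.2 with heq | hlt
      · subst heq
        simp [Real.zero_rpow (ne_of_lt ha_neg), Real.zero_rpow (ne_of_gt hb_pos)]
      · have htr : 0 < t - r := by linarith
        rw [Real.norm_eq_abs, abs_div, abs_of_pos (Real.rpow_pos_of_pos htr b), div_le_iff₀
          (Real.rpow_pos_of_pos htr b)]
        calc |r ^ a - t ^ a| ≤ |a| * (t/2)^(a-1) * (t - r) := hineq r hr'
          _ = |a| * (t/2)^(a-1) * ((t - r) ^ a * (t - r) ^ b) := by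
              rw [← Real.rpow_add htr]
              have h1 : a + b = 1 := by rw [ha_def, hb_def]; ring
              rw [h1, Real.rpow_one]
          _ = |a| * (t/2)^(a-1) * (t - r) ^ a * (t - r) ^ b := by ring
    -- done
  exact key1.trans key2
end

section
/- Let H ∈ (1/2, 1), ε ∈ (0, 1/2), T > 0, L ≥ 0, K_w ≥ 0. Let F : ℝ^d → ℝ^m be L-Lipschitz, x ∈ ℝ^d, and let w : [0, T] → ℝ^d satisfy w(0) = 0 and ‖w(u) − w(s)‖ ≤ K_w |u − s|^{H−ε} for all u, s ∈ [0, T]. For t ∈ (0, T] define G(t) := (1/Γ(3/2−H)) [ t^{1/2−H} F(x + w(t)) + (H−1/2) t^{H−1/2} ( ∫₀ᵗ (t^{1/2−H} − r^{1/2−H}) (t−r)^{−1/2−H} dr ) F(x + w(t)) + (H−1/2) t^{H−1/2} ∫₀ᵗ ( F(x + w(t)) − F(x + w(r)) ) (t−r)^{−1/2−H} r^{1/2−H} dr ]. Then there exist constants C₁ = C₁(H) > 0 and C₂ = C₂(H, ε) > 0 such that for all t ∈ (0, T]: ‖G(t)‖ ≤ C₁ t^{1/2−H} ( ‖F(x)‖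 + L · sup_{u∈[0,T]} ‖w(u)‖ ) + C₂ L K_w t^{1/2−ε}. -/
open MeasureTheory intervalIntegral

set_option maxHeartbeats 1000000

lemma rpow_mul_rpow' {t : ℝ} (ht : 0 < t) {a b c : ℝ} (h : a + b = c) :
    t ^ a * t ^ b = t ^ c := by rw [← Real.rpow_add ht, h]

lemma half_rpow' {t : ℝ} (ht : 0 ≤ t) (c : ℝ) : (t / 2) ^ c = 2 ^ (-c) * t ^ c := by
  rw [Real.div_rpow ht (by norm_num), Real.rpow_neg (by norm_num)]
  ring

lemma mul_rpow_self' {s b c : ℝ} (hs : 0 ≤ s) (h : 1 + b = c) (hc : c ≠ 0) :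
    s * s ^ b = s ^ c := by
  rcases hs.eq_or_lt with heq | h0
  · rw [← heq, Real.zero_rpow hc, zero_mul]
  · rw [← h, Real.rpow_add h0, Real.rpow_one]

lemma rpow_add_nonneg' {s a b c : ℝ} (hs : 0 ≤ s) (h : a + b = c) (ha : a ≠ 0)
    (hc : c ≠ 0) : s ^ a * s ^ b = s ^ c := by
  rcases hs.eq_or_lt with heq | h0
  · rw [← heq, Real.zero_rpow ha, Real.zero_rpow hc, zero_mul]
  · rw [← h, Real.rpow_add h0]

lemma intg_sub_pow {t a' : ℝ} (ha' : -1 < a') :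
    IntervalIntegrable (fun r => (t - r) ^ a') volume 0 t := by
  simpa using (intervalIntegrable_rpow' ha' (a := t) (b := 0)).comp_sub_left t

lemma intg_two_pows {t a a' : ℝ} (ha : -1 < a) (ha' : -1 < a') (c₁ c₂ : ℝ) :
    IntervalIntegrable (fun r => c₁ * r ^ a + c₂ * (t - r) ^ a') volume 0 t :=
  ((intervalIntegrable_rpow' ha).const_mul c₁).add ((intg_sub_pow ha').const_mul c₂)

lemma int_two_pows {t a a' : ℝ} (ha : -1 < a) (ha' : -1 < a') (c₁ c₂ : ℝ) :
    ∫ r in (0:ℝ)..t, (c₁ * r ^ a + c₂ * (t - r) ^ a') =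
      c₁ * (t ^ (a + 1) / (a + 1)) + c₂ * (t ^ (a' + 1) / (a' + 1)) := by
  have h1 : ∫ r in (0:ℝ)..t, r ^ a = t ^ (a + 1) / (a + 1) := by
    rw [integral_rpow (Or.inl ha), Real.zero_rpow (by linarith), sub_zero]
  have h2 : ∫ r in (0:ℝ)..t, (t - r) ^ a' = t ^ (a' + 1) / (a' + 1) := by
    have := intervalIntegral.integral_comp_sub_left (a := (0:ℝ)) (b := t)
      (fun x => x ^ a') t
    simp only [sub_self, sub_zero] at this
    rw [this, integral_rpow (Or.inl ha'), Real.zero_rpow (by linarith), sub_zero]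
  rw [integral_add ((intervalIntegrable_rpow' ha).const_mul c₁)
      ((intg_sub_pow ha').const_mul c₂),
    intervalIntegral.integral_const_mul, intervalIntegral.integral_const_mul, h1, h2]

lemma bern_aux {p r t : ℝ} (hp : 0 < p) (hr : 0 < r) (hrt : r ≤ t) (h2 : t ≤ 2 * r) :
    r ^ (-p) - t ^ (-p) ≤ p * 2 ^ (1 + p) * (t ^ (-p - 1) * (t - r)) := by
  have ht : 0 < t := lt_of_lt_of_le hr hrt
  set u := r / t with hu
  have hu0 : 0 < u := div_pos hr ht
  have hu1 : u ≤ 1 := (div_le_one ht).mpr hrt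
  have hu2 : 1 / 2 ≤ u := by
    rw [hu, le_div_iff₀ ht]; linarith
  have hb : 1 + (1 + p) * (u - 1) ≤ u ^ (1 + p) := by
    have := one_add_mul_self_le_rpow_one_add (s := u - 1) (by linarith) (p := 1 + p)
      (by linarith)
    rwa [show (1 : ℝ) + (u - 1) = u by ring] at this
  have key1 : u - u ^ (1 + p) ≤ p * (1 - u) := by nlinarith
  have e1 : u * u ^ (-(1 + p)) = u ^ (-p) := by
    nth_rewrite 1 [← Real.rpow_one u]
    rw [← Real.rpow_add hu0]; norm_num
  have e2 : u ^ (1 + p) * u ^ (-(1 + p)) = 1 := by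
    rw [← Real.rpow_add hu0, show (1 + p) + -(1 + p) = 0 by ring, Real.rpow_zero]
  have key3 : u ^ (-(1 + p)) ≤ 2 ^ (1 + p) := by
    calc u ^ (-(1 + p)) ≤ (1/2 : ℝ) ^ (-(1 + p)) :=
          Real.rpow_le_rpow_of_nonpos (by norm_num) hu2 (by linarith)
      _ = 2 ^ (1 + p) := by
          rw [one_div, Real.inv_rpow (by norm_num), ← Real.rpow_neg (by norm_num), neg_neg]
  have hq0 : (0:ℝ) ≤ u ^ (-(1 + p)) := Real.rpow_nonneg hu0.le _
  have key4 : u ^ (-p) - 1 ≤ p * (1 - u) * 2 ^ (1 + p) := by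
    have h5 : (u - u ^ (1 + p)) * u ^ (-(1 + p)) ≤ (p * (1 - u)) * u ^ (-(1 + p)) :=
      mul_le_mul_of_nonneg_right key1 hq0
    rw [sub_mul, e1, e2] at h5
    have h6 : (p * (1 - u)) * u ^ (-(1 + p)) ≤ (p * (1 - u)) * 2 ^ (1 + p) :=
      mul_le_mul_of_nonneg_left key3 (by nlinarith)
    calc u ^ (-p) - 1 ≤ (p * (1 - u)) * u ^ (-(1 + p)) := h5
      _ ≤ p * (1 - u) * 2 ^ (1 + p) := h6
  have htp : (0:ℝ) < t ^ (-p) := Real.rpow_pos_of_pos ht _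
  have e3 : u ^ (-p) * t ^ (-p) = r ^ (-p) := by
    rw [hu, Real.div_rpow hr.le ht.le, div_mul_cancel₀]
    exact (Real.rpow_pos_of_pos ht _).ne'
  have e4 : t ^ (-p) * (1 - u) = t ^ (-p - 1) * (t - r) := by
    have : t ^ (-p - 1) = t ^ (-p) * t⁻¹ := by
      rw [← Real.rpow_neg_one t, ← Real.rpow_add ht, sub_eq_add_neg]
    rw [this, hu]
    field_simp
  have := mul_le_mul_of_nonneg_right key4 htp.le
  calc r ^ (-p) - t ^ (-p) = (u ^ (-p) - 1) * t ^ (-p) := by rw [sub_mul, one_mul, e3]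
    _ ≤ p * (1 - u) * 2 ^ (1 + p) * t ^ (-p) := this
    _ = p * 2 ^ (1 + p) * (t ^ (-p) * (1 - u)) := by ring
    _ = p * 2 ^ (1 + p) * (t ^ (-p - 1) * (t - r)) := by rw [e4]

/-- Pointwise bound on the Weyl-representation formula `G(t)` for
`K_H^{-1}(∫₀^· F(x+w(u)) du)`, with constants `C₁ = C₁(H)` and `C₂ = C₂(H,ε)`. -/
theorem stmt4 (H ε : ℝ) (hH : H ∈ Set.Ioo (1/2 : ℝ) 1) (hε : ε ∈ Set.Ioo (0:ℝ) (1/2)) :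
    ∃ C₁ > (0:ℝ), ∃ C₂ > (0:ℝ),
      ∀ (d m : ℕ) (T L Kw : ℝ), 0 < T → 0 ≤ L → 0 ≤ Kw →
      ∀ (F : EuclideanSpace ℝ (Fin d) → EuclideanSpace ℝ (Fin m))
        (x : EuclideanSpace ℝ (Fin d)) (w : ℝ → EuclideanSpace ℝ (Fin d)),
        (∀ a b, ‖F a - F b‖ ≤ L * ‖a - b‖) →
        w 0 = 0 →
        (∀ u ∈ Set.Icc (0:ℝ) T, ∀ s ∈ Set.Icc (0:ℝ) T,
          ‖w u - w s‖ ≤ Kw * |u - s| ^ (H - ε)) →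
        ∀ t ∈ Set.Ioc (0:ℝ) T,
          ‖(1 / Real.Gamma (3/2 - H)) •
              ((t ^ (1/2 - H)) • F (x + w t)
                + ((H - 1/2) * t ^ (H - 1/2) *
                    ∫ r in (0:ℝ)..t,
                      (t ^ (1/2 - H) - r ^ (1/2 - H)) * (t - r) ^ (-(1/2) - H)) •
                      F (x + w t)
                + ((H - 1/2) * t ^ (H - 1/2)) •
                    ∫ r in (0:ℝ)..t,
                      ((t - r) ^ (-(1/2) - H) * r ^ (1/2 - H)) •
                        (F (x + w t) - F (x + w r)))‖
            ≤ C₁ * t ^ (1/2 - H) * (‖F x‖ + L * ⨆ u : Set.Icc (0:ℝ) T, ‖w ↑u‖)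
              + C₂ * L * Kw * t ^ (1/2 - ε) := by
  obtain ⟨hH1, hH2⟩ := hH
  obtain ⟨hε1, hε2⟩ := hε
  have hγ : 0 < Real.Gamma (3/2 - H) := Real.Gamma_pos_of_pos (by linarith)
  have h2pos : ∀ c : ℝ, (0:ℝ) < 2 ^ c := fun c => Real.rpow_pos_of_pos (by norm_num) c
  set K1 : ℝ := 2 ^ ((1:ℝ)/2 + H) * (1/2 + H) / (3/2 - H) with hK1def
  set K2 : ℝ := 2 ^ ((1:ℝ)/2 + ε) / (3/2 - H) + 2 ^ (H - (1:ℝ)/2) / (1/2 - ε) with hK2def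
  have hK1pos : 0 < K1 := div_pos (mul_pos (h2pos _) (by linarith)) (by linarith)
  have hK2pos : 0 < K2 :=
    add_pos (div_pos (h2pos _) (by linarith)) (div_pos (h2pos _) (by linarith))
  have hK1pos' : (0:ℝ) < 1 + (H - 1/2) * K1 := by
    have := mul_pos (show (0:ℝ) < H - 1/2 by linarith) hK1pos
    linarith
  refine ⟨(1 + (H - 1/2) * K1) / Real.Gamma (3/2 - H),
    div_pos hK1pos' hγ,
    (H - 1/2) * K2 / Real.Gamma (3/2 - H),
    div_pos (mul_pos (by linarith) hK2pos) hγ, ?_⟩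
  intro d m T L Kw hT hL hKw F x w hLip hw0 hHol t ht
  obtain ⟨ht0, htT⟩ := ht
  have ha : (-1:ℝ) < 1/2 - H := by linarith
  have ha' : (-1:ℝ) < -(1/2) - ε := by linarith
  set S := ⨆ u : Set.Icc (0:ℝ) T, ‖w ↑u‖ with hSdef
  set N := ‖F (x + w t)‖ with hNdef
  -- bound on N
  have hwS : ‖w t‖ ≤ S := by
    apply le_ciSup (f := fun u : Set.Icc (0:ℝ) T => ‖w ↑u‖) ?_ (⟨t, ht0.le, htT⟩ : Set.Icc (0:ℝ) T)
    refine ⟨Kw * T ^ (H - ε), ?_⟩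
    rintro _ ⟨u, rfl⟩
    have h := hHol u u.2 0 ⟨le_refl 0, hT.le⟩
    rw [hw0, sub_zero, sub_zero] at h
    refine h.trans (mul_le_mul_of_nonneg_left ?_ hKw)
    rw [abs_of_nonneg u.2.1]
    exact Real.rpow_le_rpow u.2.1 u.2.2 (by linarith)
  have hN : N ≤ ‖F x‖ + L * S := by
    have h1 : ‖F (x + w t) - F x‖ ≤ L * ‖w t‖ := by
      have := hLip (x + w t) x
      rwa [add_sub_cancel_left] at this
    have h2 := norm_sub_norm_le (F (x + w t)) (F x)
    have h3 : L * ‖w t‖ ≤ L * S := mul_le_mul_of_nonneg_left hwS hL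
    rw [hNdef]; linarith
  -- first integral bound
  have hI1 : |∫ r in (0:ℝ)..t, (t ^ (1/2 - H) - r ^ (1/2 - H)) * (t - r) ^ (-(1/2) - H)|
      ≤ K1 * t ^ (1 - 2*H) := by
    set c₁ : ℝ := 2 ^ ((1:ℝ)/2 + H) * t ^ (-(1/2) - H) with hc₁
    set c₂ : ℝ := (H - 1/2) * 2 ^ ((1:ℝ)/2 + H) * t ^ (-(1/2) - H) with hc₂
    have hc₁0 : 0 ≤ c₁ := mul_nonneg (h2pos _).le (Real.rpow_nonneg ht0.le _)
    have hc₂0 : 0 ≤ c₂ :=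
      mul_nonneg (mul_nonneg (by linarith) (h2pos _).le) (Real.rpow_nonneg ht0.le _)
    have hg : IntervalIntegrable (fun r => c₁ * r ^ ((1:ℝ)/2 - H) + c₂ * (t - r) ^ ((1:ℝ)/2 - H))
        volume 0 t := intg_two_pows ha ha c₁ c₂
    have hptw : ∀ r ∈ Set.Ioc (0:ℝ) t,
        ‖(t ^ ((1:ℝ)/2 - H) - r ^ ((1:ℝ)/2 - H)) * (t - r) ^ (-(1/2) - H)‖
          ≤ c₁ * r ^ ((1:ℝ)/2 - H) + c₂ * (t - r) ^ ((1:ℝ)/2 - H) := by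
      intro r hr
      obtain ⟨hr0, hrt⟩ := hr
      have h1 : t ^ ((1:ℝ)/2 - H) ≤ r ^ ((1:ℝ)/2 - H) :=
        Real.rpow_le_rpow_of_nonpos hr0 hrt (by linarith)
      have h2 : 0 ≤ (t - r) ^ (-(1/2) - H) := Real.rpow_nonneg (by linarith) _
      have hterm1 : 0 ≤ c₁ * r ^ ((1:ℝ)/2 - H) :=
        mul_nonneg hc₁0 (Real.rpow_nonneg hr0.le _)
      have hterm2 : 0 ≤ c₂ * (t - r) ^ ((1:ℝ)/2 - H) :=
        mul_nonneg hc₂0 (Real.rpow_nonneg (by linarith) _)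
      rw [Real.norm_eq_abs, abs_mul, abs_of_nonneg h2, abs_of_nonpos (by linarith), neg_sub]
      rcases le_or_gt r (t/2) with hcase | hcase
      · have hA : r ^ ((1:ℝ)/2 - H) - t ^ ((1:ℝ)/2 - H) ≤ r ^ ((1:ℝ)/2 - H) :=
          sub_le_self _ (Real.rpow_nonneg ht0.le _)
        have hB : (t - r) ^ (-(1/2) - H) ≤ (t/2) ^ (-(1/2) - H) :=
          Real.rpow_le_rpow_of_nonpos (by linarith) (by linarith) (by linarith)
        have : (r ^ ((1:ℝ)/2 - H) - t ^ ((1:ℝ)/2 - H)) * (t - r) ^ (-(1/2) - H)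
            ≤ r ^ ((1:ℝ)/2 - H) * (t/2) ^ (-(1/2) - H) :=
          mul_le_mul hA hB h2 (Real.rpow_nonneg hr0.le _)
        have e : r ^ ((1:ℝ)/2 - H) * (t/2) ^ (-(1/2) - H) = c₁ * r ^ ((1:ℝ)/2 - H) := by
          rw [half_rpow' ht0.le, show -(-(1/2:ℝ) - H) = 1/2 + H by ring, hc₁]; ring
        linarith [e ▸ this]
      · have hbern := bern_aux (p := H - 1/2) (by linarith) hr0 hrt (by linarith)
        rw [show -(H - 1/2) - 1 = -(1/2) - H by ring] at hbern
        rw [show -(H - 1/2) = (1:ℝ)/2 - H by ring,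
          show (1:ℝ) + (H - 1/2) = 1/2 + H by ring] at hbern
        have step := mul_le_mul_of_nonneg_right hbern h2
        have e : ((H - 1/2) * 2 ^ ((1:ℝ)/2 + H) * (t ^ (-(1/2) - H) * (t - r)))
              * (t - r) ^ (-(1/2) - H)
            = c₂ * ((t - r) * (t - r) ^ (-(1/2) - H)) := by rw [hc₂]; ring
        rw [e, mul_rpow_self' (by linarith) (show 1 + (-(1/2) - H) = (1:ℝ)/2 - H by ring)
          (by intro hcon; rw [sub_eq_zero] at hcon; linarith [hcon])] at step
        linarith
    have hmain := intervalIntegral.norm_integral_le_abs_of_norm_le (μ := volume) (a := (0:ℝ))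
      (b := t)
      (f := fun r => (t ^ ((1:ℝ)/2 - H) - r ^ ((1:ℝ)/2 - H)) * (t - r) ^ (-(1/2) - H))
      (g := fun r => c₁ * r ^ ((1:ℝ)/2 - H) + c₂ * (t - r) ^ ((1:ℝ)/2 - H))
      (by
        rw [Set.uIoc_of_le ht0.le]
        exact (ae_restrict_iff' measurableSet_Ioc).2 (Filter.Eventually.of_forall hptw)) hg
    rw [Real.norm_eq_abs] at hmain
    refine hmain.trans ?_
    rw [int_two_pows ha ha c₁ c₂]
    have key : c₁ * (t ^ ((1:ℝ)/2 - H + 1) / (1/2 - H + 1))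
        + c₂ * (t ^ ((1:ℝ)/2 - H + 1) / (1/2 - H + 1)) = K1 * t ^ (1 - 2*H) := by
      rw [show (1:ℝ)/2 - H + 1 = 3/2 - H by ring, hc₁, hc₂, hK1def]
      have e1 : t ^ (-(1/2) - H) * t ^ ((3:ℝ)/2 - H) = t ^ (1 - 2*H) :=
        rpow_mul_rpow' ht0 (by ring)
      linear_combination (2 ^ ((1:ℝ)/2 + H) * (1/2 + H) / (3/2 - H)) * e1
    rw [key, abs_of_nonneg (mul_nonneg hK1pos.le (Real.rpow_nonneg ht0.le _))]
  -- second integral bound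
  have hI2 : ‖∫ r in (0:ℝ)..t, ((t - r) ^ (-(1/2) - H) * r ^ ((1:ℝ)/2 - H)) •
        (F (x + w t) - F (x + w r))‖ ≤ L * Kw * K2 * t ^ (1 - H - ε) := by
    set c₁ : ℝ := L * Kw * (2 ^ ((1:ℝ)/2 + ε) * t ^ (-(1/2) - ε)) with hc₁
    set c₂ : ℝ := L * Kw * (2 ^ (H - (1:ℝ)/2) * t ^ ((1:ℝ)/2 - H)) with hc₂
    have hLK : (0:ℝ) ≤ L * Kw := mul_nonneg hL hKw
    have hc₁0 : 0 ≤ c₁ :=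
      mul_nonneg hLK (mul_nonneg (h2pos _).le (Real.rpow_nonneg ht0.le _))
    have hc₂0 : 0 ≤ c₂ :=
      mul_nonneg hLK (mul_nonneg (h2pos _).le (Real.rpow_nonneg ht0.le _))
    have hg : IntervalIntegrable
        (fun r => c₁ * r ^ ((1:ℝ)/2 - H) + c₂ * (t - r) ^ (-(1/2) - ε)) volume 0 t :=
      intg_two_pows ha ha' c₁ c₂
    have hptw : ∀ r ∈ Set.Ioc (0:ℝ) t,
        ‖((t - r) ^ (-(1/2) - H) * r ^ ((1:ℝ)/2 - H)) • (F (x + w t) - F (x + w r))‖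
          ≤ c₁ * r ^ ((1:ℝ)/2 - H) + c₂ * (t - r) ^ (-(1/2) - ε) := by
      intro r hr
      obtain ⟨hr0, hrt⟩ := hr
      have htr0 : (0:ℝ) ≤ t - r := by linarith
      have hb0 : 0 ≤ (t - r) ^ (-(1/2) - H) := Real.rpow_nonneg htr0 _
      have hra0 : 0 ≤ r ^ ((1:ℝ)/2 - H) := Real.rpow_nonneg hr0.le _
      have hterm1 : 0 ≤ c₁ * r ^ ((1:ℝ)/2 - H) := mul_nonneg hc₁0 hra0
      have hterm2 : 0 ≤ c₂ * (t - r) ^ (-(1/2) - ε) :=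
        mul_nonneg hc₂0 (Real.rpow_nonneg htr0 _)
      have hΔ : ‖F (x + w t) - F (x + w r)‖ ≤ L * (Kw * (t - r) ^ (H - ε)) := by
        have h1 := hLip (x + w t) (x + w r)
        rw [add_sub_add_left_eq_sub] at h1
        have h2 := hHol t ⟨ht0.le, htT⟩ r ⟨hr0.le, hrt.trans htT⟩
        rw [abs_of_nonneg htr0] at h2
        calc ‖F (x + w t) - F (x + w r)‖ ≤ L * ‖w t - w r‖ := h1
          _ ≤ L * (Kw * (t - r) ^ (H - ε)) := by
              rw [mul_assoc] at *
              exact mul_le_mul_of_nonneg_left h2 hL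
      rw [norm_smul, Real.norm_eq_abs, abs_mul, abs_of_nonneg hb0, abs_of_nonneg hra0]
      have step1 : (t - r) ^ (-(1/2) - H) * r ^ ((1:ℝ)/2 - H) * ‖F (x + w t) - F (x + w r)‖
          ≤ L * Kw * (r ^ ((1:ℝ)/2 - H) *
              ((t - r) ^ (-(1/2) - H) * (t - r) ^ (H - ε))) := by
        have h3 := mul_le_mul_of_nonneg_left hΔ (mul_nonneg hb0 hra0)
        calc (t - r) ^ (-(1/2) - H) * r ^ ((1:ℝ)/2 - H) * ‖F (x + w t) - F (x + w r)‖
            = ((t - r) ^ (-(1/2) - H) * r ^ ((1:ℝ)/2 - H)) *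
                ‖F (x + w t) - F (x + w r)‖ := by ring
          _ ≤ ((t - r) ^ (-(1/2) - H) * r ^ ((1:ℝ)/2 - H)) *
                (L * (Kw * (t - r) ^ (H - ε))) := h3
          _ = L * Kw * (r ^ ((1:ℝ)/2 - H) *
                ((t - r) ^ (-(1/2) - H) * (t - r) ^ (H - ε))) := by ring
      rw [rpow_add_nonneg' htr0 (show -(1/2) - H + (H - ε) = -(1/2) - ε by ring)
        (by intro hcon; linarith) (by intro hcon; linarith)] at step1
      refine step1.trans ?_
      rcases le_or_gt r (t/2) with hcase | hcase
      · have hB : (t - r) ^ (-(1/2) - ε) ≤ (t/2) ^ (-(1/2) - ε) :=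
          Real.rpow_le_rpow_of_nonpos (by linarith) (by linarith) (by linarith)
        have e : L * Kw * (r ^ ((1:ℝ)/2 - H) * (t/2) ^ (-(1/2) - ε))
            = c₁ * r ^ ((1:ℝ)/2 - H) := by
          rw [half_rpow' ht0.le, show -(-(1/2:ℝ) - ε) = 1/2 + ε by ring, hc₁]; ring
        have h4 : L * Kw * (r ^ ((1:ℝ)/2 - H) * (t - r) ^ (-(1/2) - ε))
            ≤ L * Kw * (r ^ ((1:ℝ)/2 - H) * (t/2) ^ (-(1/2) - ε)) :=
          mul_le_mul_of_nonneg_left (mul_le_mul_of_nonneg_left hB hra0) hLK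
        linarith [e ▸ h4]
      · have hA : r ^ ((1:ℝ)/2 - H) ≤ (t/2) ^ ((1:ℝ)/2 - H) :=
          Real.rpow_le_rpow_of_nonpos (by linarith) hcase.le (by linarith)
        have e : L * Kw * ((t/2) ^ ((1:ℝ)/2 - H) * (t - r) ^ (-(1/2) - ε))
            = c₂ * (t - r) ^ (-(1/2) - ε) := by
          rw [half_rpow' ht0.le, show -((1:ℝ)/2 - H) = H - 1/2 by ring, hc₂]; ring
        have hd0 : 0 ≤ (t - r) ^ (-(1/2) - ε) := Real.rpow_nonneg htr0 _
        have h4 : L * Kw * (r ^ ((1:ℝ)/2 - H) * (t - r) ^ (-(1/2) - ε))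
            ≤ L * Kw * ((t/2) ^ ((1:ℝ)/2 - H) * (t - r) ^ (-(1/2) - ε)) :=
          mul_le_mul_of_nonneg_left (mul_le_mul_of_nonneg_right hA hd0) hLK
        linarith [e ▸ h4]
    have hmain := intervalIntegral.norm_integral_le_abs_of_norm_le (μ := volume) (a := (0:ℝ))
      (b := t)
      (f := fun r => ((t - r) ^ (-(1/2) - H) * r ^ ((1:ℝ)/2 - H)) •
        (F (x + w t) - F (x + w r)))
      (g := fun r => c₁ * r ^ ((1:ℝ)/2 - H) + c₂ * (t - r) ^ (-(1/2) - ε))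
      (by
        rw [Set.uIoc_of_le ht0.le]
        exact (ae_restrict_iff' measurableSet_Ioc).2 (Filter.Eventually.of_forall hptw)) hg
    refine hmain.trans ?_
    rw [int_two_pows ha ha' c₁ c₂]
    have key : c₁ * (t ^ ((1:ℝ)/2 - H + 1) / (1/2 - H + 1))
        + c₂ * (t ^ (-(1/2) - ε + 1) / (-(1/2) - ε + 1))
        = L * Kw * K2 * t ^ (1 - H - ε) := by
      rw [show (1:ℝ)/2 - H + 1 = 3/2 - H by ring, show -(1/2:ℝ) - ε + 1 = 1/2 - ε by ring,
        hc₁, hc₂, hK2def]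
      have e1 : t ^ (-(1/2) - ε) * t ^ ((3:ℝ)/2 - H) = t ^ (1 - H - ε) :=
        rpow_mul_rpow' ht0 (by ring)
      have e2 : t ^ ((1:ℝ)/2 - H) * t ^ ((1:ℝ)/2 - ε) = t ^ (1 - H - ε) :=
        rpow_mul_rpow' ht0 (by ring)
      linear_combination (L * Kw * 2 ^ ((1:ℝ)/2 + ε) / (3/2 - H)) * e1
        + (L * Kw * 2 ^ (H - (1:ℝ)/2) / (1/2 - ε)) * e2
    rw [key, abs_of_nonneg (mul_nonneg (mul_nonneg hLK hK2pos.le)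
      (Real.rpow_nonneg ht0.le _))]
  -- assembly
  have c0 : (0:ℝ) ≤ (H - 1/2) * t ^ (H - 1/2) :=
    mul_nonneg (by linarith) (Real.rpow_nonneg ht0.le _)
  have hA : ‖(t ^ ((1:ℝ)/2 - H)) • F (x + w t)‖ = t ^ ((1:ℝ)/2 - H) * N := by
    rw [norm_smul, Real.norm_eq_abs, abs_of_nonneg (Real.rpow_nonneg ht0.le _)]
  have hBn : ‖((H - 1/2) * t ^ (H - 1/2) * ∫ r in (0:ℝ)..t,
        (t ^ ((1:ℝ)/2 - H) - r ^ ((1:ℝ)/2 - H)) * (t - r) ^ (-(1/2) - H)) • F (x + w t)‖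
      ≤ ((H - 1/2) * K1) * (t ^ ((1:ℝ)/2 - H) * N) := by
    rw [norm_smul, Real.norm_eq_abs, abs_mul,
      abs_of_nonneg c0]
    have h1 := mul_le_mul_of_nonneg_right (mul_le_mul_of_nonneg_left hI1 c0)
      (norm_nonneg (F (x + w t)))
    refine h1.trans (le_of_eq ?_)
    rw [← rpow_mul_rpow' ht0 (show (H - 1/2) + (1 - 2*H) = (1:ℝ)/2 - H by ring)]
    ring
  have hCn : ‖((H - 1/2) * t ^ (H - 1/2)) • ∫ r in (0:ℝ)..t,
        ((t - r) ^ (-(1/2) - H) * r ^ ((1:ℝ)/2 - H)) • (F (x + w t) - F (x + w r))‖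
      ≤ ((H - 1/2) * K2) * (L * Kw * t ^ ((1:ℝ)/2 - ε)) := by
    rw [norm_smul, Real.norm_eq_abs, abs_of_nonneg c0]
    have h1 := mul_le_mul_of_nonneg_left hI2 c0
    refine h1.trans (le_of_eq ?_)
    rw [← rpow_mul_rpow' ht0 (show (H - 1/2) + (1 - H - ε) = (1:ℝ)/2 - ε by ring)]
    ring
  rw [norm_smul, Real.norm_eq_abs,
    abs_of_pos (show (0:ℝ) < 1 / Real.Gamma (3/2 - H) by positivity)]
  have htri : ‖(t ^ ((1:ℝ)/2 - H)) • F (x + w t)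
        + ((H - 1/2) * t ^ (H - 1/2) * ∫ r in (0:ℝ)..t,
            (t ^ ((1:ℝ)/2 - H) - r ^ ((1:ℝ)/2 - H)) * (t - r) ^ (-(1/2) - H)) • F (x + w t)
        + ((H - 1/2) * t ^ (H - 1/2)) • ∫ r in (0:ℝ)..t,
            ((t - r) ^ (-(1/2) - H) * r ^ ((1:ℝ)/2 - H)) • (F (x + w t) - F (x + w r))‖
      ≤ t ^ ((1:ℝ)/2 - H) * (‖F x‖ + L * S)
        + ((H - 1/2) * K1) * (t ^ ((1:ℝ)/2 - H) * (‖F x‖ + L * S))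
        + ((H - 1/2) * K2) * (L * Kw * t ^ ((1:ℝ)/2 - ε)) := by
    have htri0 := norm_add₃_le (a := (t ^ ((1:ℝ)/2 - H)) • F (x + w t))
      (b := ((H - 1/2) * t ^ (H - 1/2) * ∫ r in (0:ℝ)..t,
            (t ^ ((1:ℝ)/2 - H) - r ^ ((1:ℝ)/2 - H)) * (t - r) ^ (-(1/2) - H)) • F (x + w t))
      (c := ((H - 1/2) * t ^ (H - 1/2)) • ∫ r in (0:ℝ)..t,
            ((t - r) ^ (-(1/2) - H) * r ^ ((1:ℝ)/2 - H)) • (F (x + w t) - F (x + w r)))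
    rw [hA] at htri0
    have hNle : t ^ ((1:ℝ)/2 - H) * N ≤ t ^ ((1:ℝ)/2 - H) * (‖F x‖ + L * S) :=
      mul_le_mul_of_nonneg_left hN (Real.rpow_nonneg ht0.le _)
    have hNle2 : ((H - 1/2) * K1) * (t ^ ((1:ℝ)/2 - H) * N)
        ≤ ((H - 1/2) * K1) * (t ^ ((1:ℝ)/2 - H) * (‖F x‖ + L * S)) :=
      mul_le_mul_of_nonneg_left hNle (mul_nonneg (by linarith) hK1pos.le)
    linarith [htri0, hBn, hCn]
  refine (mul_le_mul_of_nonneg_left htri (by positivity)).trans (le_of_eq ?_)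
  field_simp
end

section
/- Let d₁, d₂, l ∈ ℕ, T > 0, L ≥ 0, x ∈ ℝ^{d₁}. Let w, φ : [0, T] → ℝ^{d₁} be continuous, let g : [0, T] → ℝ^l be continuously differentiable, let k : [0, T] → ℝ^l be continuous, and let σ : ℝ^{d₁} → M_{d₂×l}(ℝ) be continuously differentiable with ‖Dσ(z)‖ ≤ L for all z. Then the map ε ↦ ∫₀ᵀ σ( x + w(u) + ε φ(u) ) ( g'(u) + ε k(u) ) du, from ℝ to ℝ^{d₂}, is differentiable at ε = 0 with derivative ∫₀ᵀ σ(x + w(u)) k(u) du + ∫₀ᵀ (Dσ(x + w(u)) φ(u)) g'(u) du. -/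
open MeasureTheory intervalIntegral Matrix

attribute [local instance] Matrix.normedAddCommGroup Matrix.normedSpace


section Aux
variable {d₂ l : ℕ}

theorem aux_hasDerivAt_pi {ι : Type*} [Fintype ι] {E : ι → Type*}
    [∀ i, NormedAddCommGroup (E i)] [∀ i, NormedSpace ℝ (E i)]
    {f : ℝ → ∀ i, E i} {f' : ∀ i, E i} {t : ℝ}
    (h : ∀ i, HasDerivAt (fun s => f s i) (f' i) t) : HasDerivAt f f' t := by
  exact hasDerivAt_pi.2 h

theorem aux_entry {A : ℝ → Matrix (Fin d₂) (Fin l) ℝ} {A' : Matrix (Fin d₂) (Fin l) ℝ}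
    {t : ℝ} (hA : HasDerivAt A A' t) (i : Fin d₂) (j : Fin l) :
    HasDerivAt (fun s => A s i j) (A' i j) t := by
  have h1 : HasDerivAt (fun s => A s i) (A' i) t :=
    (ContinuousLinearMap.proj (R := ℝ) (φ := fun _ : Fin d₂ => Fin l → ℝ) i).hasFDerivAt.comp_hasDerivAt t hA
  exact (ContinuousLinearMap.proj (R := ℝ) (φ := fun _ : Fin l => ℝ) j).hasFDerivAt.comp_hasDerivAt t h1

theorem aux_hasDerivAt_mulVec {A : ℝ → Matrix (Fin d₂) (Fin l) ℝ}
    {A' : Matrix (Fin d₂) (Fin l) ℝ} {v : ℝ → Fin l → ℝ} {v' : Fin l → ℝ} {t : ℝ}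
    (hA : HasDerivAt A A' t) (hv : HasDerivAt v v' t) :
    HasDerivAt (fun s => (A s).mulVec (v s)) (A'.mulVec (v t) + (A t).mulVec v') t := by
  apply aux_hasDerivAt_pi
  intro i
  have hve : ∀ j, HasDerivAt (fun s => v s j) (v' j) t := fun j =>
    (ContinuousLinearMap.proj (R := ℝ) (φ := fun _ : Fin l => ℝ) j).hasFDerivAt.comp_hasDerivAt t hv
  have : HasDerivAt (fun s => ∑ j, A s i j * v s j)
      (∑ j, (A' i j * v t j + A t i j * v' j)) t :=
    HasDerivAt.fun_sum fun j _ => (aux_entry hA i j).mul (hve j)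
  have key : (fun s => (A s).mulVec (v s) i) = fun s => ∑ j, A s i j * v s j := by
    funext s; simp [Matrix.mulVec, dotProduct]
  have key2 : (A'.mulVec (v t) + (A t).mulVec v') i = ∑ j, (A' i j * v t j + A t i j * v' j) := by
    simp [Matrix.mulVec, dotProduct, Finset.sum_add_distrib]
  rw [key, key2]; exact this

theorem aux_norm_mulVec_le (M : Matrix (Fin d₂) (Fin l) ℝ) (v : Fin l → ℝ) :
    ‖M.mulVec v‖ ≤ (l : ℝ) * ‖M‖ * ‖v‖ := by
  have h0 : (0:ℝ) ≤ (l : ℝ) * ‖M‖ * ‖v‖ := by positivity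
  rw [pi_norm_le_iff_of_nonneg h0]
  intro i
  calc ‖M.mulVec v i‖ = ‖∑ j, M i j * v j‖ := by simp [Matrix.mulVec, dotProduct]
    _ ≤ ∑ j, ‖M i j * v j‖ := norm_sum_le _ _
    _ ≤ ∑ _j : Fin l, ‖M‖ * ‖v‖ := by
        apply Finset.sum_le_sum
        intro j _
        rw [norm_mul]
        exact mul_le_mul (M.norm_entry_le_entrywise_sup_norm) (norm_le_pi_norm v j)
          (norm_nonneg _) (norm_nonneg _)
    _ = (l : ℝ) * ‖M‖ * ‖v‖ := by simp [mul_assoc]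

theorem aux_continuousOn_mulVec {A : ℝ → Matrix (Fin d₂) (Fin l) ℝ} {v : ℝ → Fin l → ℝ}
    {s : Set ℝ} (hA : ContinuousOn A s) (hv : ContinuousOn v s) :
    ContinuousOn (fun u => (A u).mulVec (v u)) s := by
  have h : Continuous fun p : Matrix (Fin d₂) (Fin l) ℝ × (Fin l → ℝ) => p.1.mulVec p.2 :=
    continuous_fst.matrix_mulVec continuous_snd
  exact h.comp_continuousOn (hA.prodMk hv)

end Aux

/-- Smooth-path form of the Cameron–Martin directional derivative: the map
`ε ↦ ∫₀ᵀ σ(x + w(u) + ε φ(u)) (g'(u) + ε k(u)) du` is differentiable at `ε = 0` with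
derivative `∫₀ᵀ σ(x + w(u)) k(u) du + ∫₀ᵀ (Dσ(x + w(u)) φ(u)) g'(u) du`. -/
theorem stmt12 (d₁ d₂ l : ℕ) (T L : ℝ) (hT : 0 < T) (hL : 0 ≤ L) (x : Fin d₁ → ℝ)
    (w φ : ℝ → (Fin d₁ → ℝ))
    (hw : ContinuousOn w (Set.Icc 0 T)) (hφ : ContinuousOn φ (Set.Icc 0 T))
    (g : ℝ → (Fin l → ℝ)) (hg : ContDiff ℝ 1 g)
    (k : ℝ → (Fin l → ℝ)) (hk : ContinuousOn k (Set.Icc 0 T))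
    (σ : (Fin d₁ → ℝ) → Matrix (Fin d₂) (Fin l) ℝ) (hσ : ContDiff ℝ 1 σ)
    (hσL : ∀ z, (fderiv ℝ σ z).opNorm ≤ L) :
    HasDerivAt
      (fun ε : ℝ =>
        ∫ u in (0:ℝ)..T, (σ (x + w u + ε • φ u)).mulVec (deriv g u + ε • k u))
      ((∫ u in (0:ℝ)..T, (σ (x + w u)).mulVec (k u))
        + ∫ u in (0:ℝ)..T, (fderiv ℝ σ (x + w u) (φ u)).mulVec (deriv g u))
      0 := by
  have hσd : Differentiable ℝ σ := hσ.differentiable one_ne_zero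
  have hgc : Continuous (deriv g) := hg.continuous_deriv le_rfl
  have hσfc : Continuous (fderiv ℝ σ) := hσ.continuous_fderiv one_ne_zero
  have hlip : LipschitzWith (Real.toNNReal L) σ :=
    lipschitzWith_of_nnnorm_fderiv_le hσd fun z => by
      rw [← NNReal.coe_le_coe, Real.coe_toNNReal _ hL, coe_nnnorm]
      refine ContinuousLinearMap.opNorm_le_bound _ (le_trans (ContinuousLinearMap.opNorm_nonneg _) (hσL z)) fun v => ?_
      exact le_trans ((fderiv ℝ σ z).le_opNorm v) (mul_le_mul_of_nonneg_right (hσL z) (norm_nonneg _))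
  have hσb : ∀ z : Fin d₁ → ℝ, ‖σ z‖ ≤ ‖σ 0‖ + L * ‖z‖ := by
    intro z
    have h1 : ‖σ z - σ 0‖ ≤ L * ‖z‖ := by
      have := hlip.dist_le_mul z 0
      simpa [dist_eq_norm, Real.coe_toNNReal _ hL] using this
    calc ‖σ z‖ = ‖σ 0 + (σ z - σ 0)‖ := by simp
      _ ≤ ‖σ 0‖ + ‖σ z - σ 0‖ := norm_add_le _ _
      _ ≤ ‖σ 0‖ + L * ‖z‖ := by linarith
  obtain ⟨Cw, hCw⟩ := isCompact_Icc.exists_bound_of_continuousOn hw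
  obtain ⟨Cφ, hCφ⟩ := isCompact_Icc.exists_bound_of_continuousOn hφ
  obtain ⟨Ck, hCk⟩ := isCompact_Icc.exists_bound_of_continuousOn hk
  obtain ⟨Cg, hCg⟩ := isCompact_Icc.exists_bound_of_continuousOn hgc.continuousOn
  have h0T : (0:ℝ) ∈ Set.Icc (0:ℝ) T := ⟨le_refl _, hT.le⟩
  have hCw0 : 0 ≤ Cw := (norm_nonneg _).trans (hCw 0 h0T)
  have hCφ0 : 0 ≤ Cφ := (norm_nonneg _).trans (hCφ 0 h0T)
  have hCk0 : 0 ≤ Ck := (norm_nonneg _).trans (hCk 0 h0T)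
  have hCg0 : 0 ≤ Cg := (norm_nonneg _).trans (hCg 0 h0T)
  set Cσ : ℝ := ‖σ 0‖ + L * (‖x‖ + Cw + Cφ) with hCσdef
  have hCσ0 : 0 ≤ Cσ := by positivity
  set B : ℝ := (l : ℝ) * (L * Cφ) * (Cg + Ck) + (l : ℝ) * Cσ * Ck with hBdef
  have hsub : Set.uIoc (0:ℝ) T ⊆ Set.Icc 0 T := by
    rw [Set.uIoc_of_le hT.le]; exact Set.Ioc_subset_Icc_self
  have huIcc : Set.uIcc (0:ℝ) T = Set.Icc 0 T := Set.uIcc_of_le hT.le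
  have hzc : ∀ ε : ℝ, ContinuousOn (fun u => x + w u + ε • φ u) (Set.Icc 0 T) :=
    fun ε => (continuousOn_const.add hw).add (hφ.const_smul ε)
  have hFcont : ∀ ε : ℝ,
      ContinuousOn (fun u => (σ (x + w u + ε • φ u)).mulVec (deriv g u + ε • k u))
        (Set.Icc 0 T) := fun ε =>
    aux_continuousOn_mulVec (hσ.continuous.comp_continuousOn (hzc ε))
      (hgc.continuousOn.add (hk.const_smul ε))
  have hF'cont : ContinuousOn
      (fun u => (fderiv ℝ σ (x + w u + (0:ℝ) • φ u) (φ u)).mulVec (deriv g u + (0:ℝ) • k u)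
        + (σ (x + w u + (0:ℝ) • φ u)).mulVec (k u)) (Set.Icc 0 T) := by
    apply ContinuousOn.add
    · exact aux_continuousOn_mulVec ((hσfc.comp_continuousOn (hzc 0)).clm_apply hφ)
        (hgc.continuousOn.add (hk.const_smul (0:ℝ)))
    · exact aux_continuousOn_mulVec (hσ.continuous.comp_continuousOn (hzc 0)) hk
  have main := intervalIntegral.hasDerivAt_integral_of_dominated_loc_of_deriv_le
    (𝕜 := ℝ) (μ := MeasureTheory.volume) (a := 0) (b := T)
    (F := fun ε u => (σ (x + w u + ε • φ u)).mulVec (deriv g u + ε • k u))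
    (F' := fun ε u => (fderiv ℝ σ (x + w u + ε • φ u) (φ u)).mulVec (deriv g u + ε • k u)
        + (σ (x + w u + ε • φ u)).mulVec (k u))
    (x₀ := (0:ℝ)) (bound := fun _ => B) (s := Metric.ball (0:ℝ) 1) (Metric.ball_mem_nhds _ one_pos)
    (Filter.Eventually.of_forall fun ε =>
      ((hFcont ε).mono hsub).aestronglyMeasurable measurableSet_uIoc)
    ((huIcc ▸ hFcont 0).intervalIntegrable)
    ((hF'cont.mono hsub).aestronglyMeasurable measurableSet_uIoc)
    (Filter.Eventually.of_forall ?hbound)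
    intervalIntegrable_const
    (Filter.Eventually.of_forall ?hdiff)
  have h2 := main.2
  simp only [zero_smul, add_zero] at h2
  have hi1 : IntervalIntegrable (fun u => (σ (x + w u)).mulVec (k u))
      MeasureTheory.volume 0 T :=
    (huIcc ▸ aux_continuousOn_mulVec (hσ.continuous.comp_continuousOn
      ((continuousOn_const.add hw))) hk).intervalIntegrable
  have hi2 : IntervalIntegrable (fun u => (fderiv ℝ σ (x + w u) (φ u)).mulVec (deriv g u))
      MeasureTheory.volume 0 T :=
    (huIcc ▸ aux_continuousOn_mulVec
      ((hσfc.comp_continuousOn (continuousOn_const.add hw)).clm_apply hφ)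
      hgc.continuousOn).intervalIntegrable
  rw [intervalIntegral.integral_add hi2 hi1] at h2
  simpa [add_comm] using h2

  case hbound =>
    -- the bound
    intro u hu ε hε
    have hu' : u ∈ Set.Icc 0 T := hsub hu
    have hε1 : ‖ε‖ ≤ 1 := by
      have := Metric.mem_ball.1 hε
      rw [dist_zero_right] at this
      exact this.le
    set z : Fin d₁ → ℝ := x + w u + ε • φ u with hzdef
    have hz : ‖z‖ ≤ ‖x‖ + Cw + Cφ := by
      calc ‖z‖ ≤ ‖x + w u‖ + ‖ε • φ u‖ := norm_add_le _ _
        _ ≤ (‖x‖ + ‖w u‖) + ‖ε‖ * ‖φ u‖ := by rw [norm_smul]; gcongr; exact norm_add_le _ _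
        _ ≤ (‖x‖ + Cw) + 1 * Cφ :=
            add_le_add (add_le_add le_rfl (hCw u hu'))
              (mul_le_mul hε1 (hCφ u hu') (norm_nonneg _) zero_le_one)
        _ = ‖x‖ + Cw + Cφ := by ring
    have e1 : ‖fderiv ℝ σ z (φ u)‖ ≤ L * Cφ :=
      le_trans ((fderiv ℝ σ z).le_opNorm (φ u))
        (mul_le_mul (hσL z) (hCφ u hu') (norm_nonneg _) hL)
    have e2 : ‖deriv g u + ε • k u‖ ≤ Cg + Ck := by
      calc ‖deriv g u + ε • k u‖ ≤ ‖deriv g u‖ + ‖ε‖ * ‖k u‖ := by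
            rw [← norm_smul]; exact norm_add_le _ _
        _ ≤ Cg + 1 * Ck :=
            add_le_add (hCg u hu') (mul_le_mul hε1 (hCk u hu') (norm_nonneg _) zero_le_one)
        _ = Cg + Ck := by ring
    have e3 : ‖σ z‖ ≤ Cσ :=
      le_trans (hσb z) (by rw [hCσdef]; gcongr)
    have e4 : ‖k u‖ ≤ Ck := hCk u hu'
    have n1 : (0:ℝ) ≤ (l:ℝ) := Nat.cast_nonneg l
    calc ‖(fderiv ℝ σ z (φ u)).mulVec (deriv g u + ε • k u) + (σ z).mulVec (k u)‖
        ≤ ‖(fderiv ℝ σ z (φ u)).mulVec (deriv g u + ε • k u)‖ + ‖(σ z).mulVec (k u)‖ :=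
          norm_add_le _ _
      _ ≤ (l : ℝ) * ‖fderiv ℝ σ z (φ u)‖ * ‖deriv g u + ε • k u‖
          + (l : ℝ) * ‖σ z‖ * ‖k u‖ :=
          add_le_add (aux_norm_mulVec_le _ _) (aux_norm_mulVec_le _ _)
      _ ≤ B := by
          rw [hBdef]
          apply add_le_add
          · exact mul_le_mul (mul_le_mul_of_nonneg_left e1 n1) e2 (norm_nonneg _)
              (by positivity)
          · exact mul_le_mul (mul_le_mul_of_nonneg_left e3 n1) e4 (norm_nonneg _)
              (by positivity)
  case hdiff =>
    -- differentiability in ε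
    intro u _ ε _
    have hz : HasDerivAt (fun s : ℝ => x + w u + s • φ u) (φ u) ε := by
      simpa using ((hasDerivAt_id ε).smul_const (φ u)).const_add (x + w u)
    have hA : HasDerivAt (fun s : ℝ => σ (x + w u + s • φ u))
        (fderiv ℝ σ (x + w u + ε • φ u) (φ u)) ε :=
      (hσd _).hasFDerivAt.comp_hasDerivAt ε hz
    have hv : HasDerivAt (fun s : ℝ => deriv g u + s • k u) (k u) ε := by
      simpa using ((hasDerivAt_id ε).smul_const (k u)).const_add (deriv g u)
    exact aux_hasDerivAt_mulVec hA hv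
end
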